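/- Every finite monoid generating set of a finitely generated abelian group has the falsification by fellow traveller property: there exists δ such that any non-geodesic word is asynchronously δ-fellow travelled by a shorter word with the same value. -/

import Mathlib

/-! Words over a finite monoid generating set of a group, word length,
directed Cayley-graph distance, paths, asynchronous fellow travelling,
and the falsification-by-fellow-traveller property. -/

variable {A G : Type*} [Group G]

/-- The value in `G` of a word over the alphabet `A`. -/
def evalWord (π : A → G) (w : List A) : G := (w.map π).prod

/-- `π : A → G` is a monoid generating set: every element is the value of a word. -/
def Generates (π : A → G) : Prop := ∀ g : G, ∃ w : List A, evalWord π w = g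

/-- Word length of a group element: the least length of a word representing it. -/
noncomputable def wordLen (π : A → G) (g : G) : ℕ :=
  sInf {n | ∃ w : List A, evalWord π w = g ∧ w.length = n}

/-- Directed Cayley graph distance. -/
noncomputable def cayleyDist (π : A → G) (g h : G) : ℕ := wordLen π (g⁻¹ * h)

/-- The path in the Cayley graph determined by a word (constant after the end). -/
def pathOf (π : A → G) (w : List A) (t : ℕ) : G := evalWord π (w.take t)

/-- A word is geodesic if its length is the word length of its value. -/
noncomputable def IsGeodesicWord (π : A → G) (w : List A) : Prop :=
  w.length = wordLen π (evalWord π w)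

/-- `q` asynchronously `δ`-tracks `p`: there is a monotone proper
reparametrization `f` with `d(p t, q (f t)) ≤ δ` for all `t`. -/
def AsyncTracks (π : A → G) (δ : ℕ) (p q : ℕ → G) : Prop :=
  ∃ f : ℕ → ℕ, Monotone f ∧ (∀ N : ℕ, ∃ t, N ≤ f t) ∧
    ∀ t, cayleyDist π (p t) (q (f t)) ≤ δ

/-- Two paths asynchronously `δ`-fellow travel. -/
def AsyncFellow (π : A → G) (δ : ℕ) (p q : ℕ → G) : Prop :=
  AsyncTracks π δ p q ∧ AsyncTracks π δ q p

/-- The falsification by fellow traveller property with constant `δ`: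
every non-geodesic word is asynchronously `δ`-fellow travelled by a strictly
shorter word with the same value. -/
noncomputable def FFTP (π : A → G) (δ : ℕ) : Prop :=
  ∀ w : List A, ¬ IsGeodesicWord π w →
    ∃ v : List A, evalWord π v = evalWord π w ∧ v.length < w.length ∧
      AsyncFellow π δ (pathOf π w) (pathOf π v)

namespace FFTPaux

variable {A : Type*}

theorem nat_inf_eq (x y : ℕ) : x ⊓ y = min x y := rfl

/-! ### Counting vectors and deletion of letters -/

/-- Count vector of a word. -/
def cnt [DecidableEq A] : List A → A → ℕ
  | [], _ => 0
  | b :: w, a => (if b = a then 1 else 0) + cnt w a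

/-- Indicator vector of a letter. -/
def e [DecidableEq A] (a : A) : A → ℕ := fun b => if a = b then 1 else 0

/-- Decrease a budget at a letter. -/
def decr [DecidableEq A] (m : A → ℕ) (a : A) : A → ℕ := fun b => if a = b then m a - 1 else m b

/-- Delete, scanning left to right, up to `m a` occurrences of each letter `a`. -/
def del [DecidableEq A] : (A → ℕ) → List A → List A
  | _, [] => []
  | m, a :: w => if m a = 0 then a :: del m w else del (decr m a) w

section Cnt
variable [DecidableEq A]

theorem cnt_nil : cnt ([] : List A) = 0 := by
  funext b; simp [cnt]

theorem cnt_cons (a : A) (w : List A) : cnt (a :: w) = e a + cnt w := by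
  funext b
  by_cases h : a = b <;> simp [cnt, e, h]

theorem cnt_append (u v : List A) : cnt (u ++ v) = cnt u + cnt v := by
  induction u with
  | nil => rw [cnt_nil, List.nil_append, zero_add]
  | cons a u ih => rw [List.cons_append, cnt_cons, cnt_cons, ih, add_assoc]

theorem cnt_mono_prefix {u v : List A} (h : u <+: v) : cnt u ≤ cnt v := by
  obtain ⟨r, rfl⟩ := h
  intro a
  rw [cnt_append]
  exact Nat.le_add_right _ _

theorem infcnt_cons_pos {m : A → ℕ} {a : A} (w : List A) (h : m a ≠ 0) :
    m ⊓ cnt (a :: w) = e a + (decr m a ⊓ cnt w) := by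
  funext b
  simp only [Pi.inf_apply, Pi.add_apply, cnt, e, decr]
  split_ifs with h'
  · subst h'
    omega
  · omega

theorem infcnt_cons_zero {m : A → ℕ} {a : A} (w : List A) (h : m a = 0) :
    m ⊓ cnt (a :: w) = m ⊓ cnt w := by
  funext b
  simp only [Pi.inf_apply, cnt]
  split_ifs with h'
  · subst h'
    omega
  · omega

theorem del_take_prefix (w : List A) : ∀ (m : A → ℕ) (t : ℕ), del m (w.take t) <+: del m w := by
  induction w with
  | nil => intro m t; simp [del]
  | cons a w ih =>
    intro m t
    cases t with
    | zero => simp only [List.take_zero, del]; exact List.nil_prefix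
    | succ t =>
      rw [List.take_succ_cons]
      by_cases h : m a = 0
      · simp only [del, if_pos h]
        obtain ⟨r, hr⟩ := ih m t
        exact ⟨r, by rw [List.cons_append, hr]⟩
      · simp only [del, if_neg h]
        exact ih (decr m a) t

theorem del_take_prefix_mono (w : List A) (m : A → ℕ) {t t' : ℕ} (h : t ≤ t') :
    del m (w.take t) <+: del m (w.take t') := by
  have h2 := del_take_prefix (w.take t') m t
  rwa [List.take_take, min_eq_left h] at h2

end Cnt

section Plen
variable [DecidableEq A] [Fintype A]

/-- Total size of a vector. -/
def plen (n : A → ℕ) : ℕ := ∑ a, n a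

theorem plen_add (m n : A → ℕ) : plen (m + n) = plen m + plen n := by
  simp [plen, Finset.sum_add_distrib]

theorem plen_e (a : A) : plen (e a) = 1 := by
  rw [plen, Finset.sum_eq_single a]
  · simp [e]
  · intro b _ hb
    simp [e, Ne.symm hb]
  · intro h; exact absurd (Finset.mem_univ a) h

theorem plen_mono {m n : A → ℕ} (h : m ≤ n) : plen m ≤ plen n :=
  Finset.sum_le_sum fun a _ => h a

theorem plen_cnt (w : List A) : plen (cnt w) = w.length := by
  induction w with
  | nil => simp [plen, cnt]
  | cons a w ih =>
    rw [cnt_cons, plen_add, plen_e, ih, List.length_cons]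
    omega

theorem plen_lt_of_lt {m n : A → ℕ} (hle : m ≤ n) (hne : m ≠ n) : plen m < plen n := by
  obtain ⟨a, ha⟩ : ∃ a, m a ≠ n a := by
    by_contra h
    push_neg at h
    exact hne (funext h)
  exact Finset.sum_lt_sum (fun i _ => hle i) ⟨a, Finset.mem_univ a, lt_of_le_of_ne (hle a) ha⟩

theorem length_del (w : List A) : ∀ m : A → ℕ,
    (del m w).length + plen (m ⊓ cnt w) = w.length := by
  induction w with
  | nil =>
    intro m
    have h0 : m ⊓ cnt ([] : List A) = 0 := by
      funext b
      simp only [Pi.inf_apply, Pi.zero_apply, cnt_nil]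
      omega
    rw [h0]
    simp [del, plen]
  | cons a w ih =>
    intro m
    by_cases h : m a = 0
    · simp only [del, if_pos h, infcnt_cons_zero w h, List.length_cons]
      have := ih m
      omega
    · simp only [del, if_neg h, infcnt_cons_pos w h, plen_add, plen_e, List.length_cons]
      have := ih (decr m a)
      omega

theorem del_take_len_step (w : List A) (m : A → ℕ) (t : ℕ) :
    (del m (w.take (t + 1))).length ≤ (del m (w.take t)).length + 1 := by
  have h1 := length_del (w.take t) m
  have h2 := length_del (w.take (t + 1)) m
  have pre : w.take t <+: w.take (t + 1) := by
    have h3 := List.take_prefix t (w.take (t + 1))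
    rwa [List.take_take, min_eq_left (Nat.le_succ t)] at h3
  have h3 : plen (m ⊓ cnt (w.take t)) ≤ plen (m ⊓ cnt (w.take (t + 1))) :=
    plen_mono (inf_le_inf_left m (cnt_mono_prefix pre))
  have h4 : (w.take (t + 1)).length ≤ (w.take t).length + 1 := by
    simp only [List.length_take]
    omega
  omega

theorem mem_delset (w : List A) (m : A → ℕ) {s : ℕ} (hs : s ≤ (del m w).length) :
    w.length ∈ {t | s ≤ (del m (w.take t)).length} := by
  simp only [Set.mem_setOf_eq, List.take_length]
  exact hs

theorem del_take_exact (w : List A) (m : A → ℕ) (s : ℕ)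
    (hs : s ≤ (del m w).length) :
    (del m (w.take (sInf {t | s ≤ (del m (w.take t)).length}))).length = s := by
  have hmem := Nat.sInf_mem (⟨w.length, mem_delset w m hs⟩ :
    Set.Nonempty {t | s ≤ (del m (w.take t)).length})
  set T := sInf {t | s ≤ (del m (w.take t)).length} with hT
  simp only [Set.mem_setOf_eq] at hmem
  rcases Nat.eq_zero_or_pos T with h0 | hpos
  · have hz : (del m (w.take 0)).length = 0 := by simp [del]
    rw [h0] at hmem ⊢
    omega
  · have hnot : T - 1 ∉ {t | s ≤ (del m (w.take t)).length} := by
      apply Nat.notMem_of_lt_sInf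
      rw [← hT]
      omega
    simp only [Set.mem_setOf_eq, not_le] at hnot
    have hstep := del_take_len_step w m (T - 1)
    have h1 : T - 1 + 1 = T := by omega
    rw [h1] at hstep
    omega

end Plen

/-! ### Word values and word length -/

section GroupLemmas
variable {G : Type*} [Group G] (π : A → G)

theorem evalWord_nil : evalWord π [] = 1 := rfl

theorem evalWord_cons (a : A) (w : List A) : evalWord π (a :: w) = π a * evalWord π w := by
  simp [evalWord]

theorem evalWord_append (u v : List A) :
    evalWord π (u ++ v) = evalWord π u * evalWord π v := by
  simp [evalWord]

theorem eval_replicate (a : A) (k : ℕ) : evalWord π (List.replicate k a) = π a ^ k := by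
  simp [evalWord, List.map_replicate, List.prod_replicate]

theorem wordLen_le {g : G} (w : List A) (h : evalWord π w = g) : wordLen π g ≤ w.length :=
  Nat.sInf_le ⟨w, h, rfl⟩

theorem exists_word (hgen : Generates π) (g : G) :
    ∃ w : List A, evalWord π w = g ∧ w.length = wordLen π g := by
  obtain ⟨w, hw⟩ := hgen g
  exact Nat.sInf_mem (⟨w.length, w, hw, rfl⟩ :
    Set.Nonempty {n | ∃ w : List A, evalWord π w = g ∧ w.length = n})

theorem wordLen_one : wordLen π (1 : G) = 0 :=
  Nat.le_zero.mp (wordLen_le π [] rfl)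

theorem wordLen_mul (hgen : Generates π) (g h : G) :
    wordLen π (g * h) ≤ wordLen π g + wordLen π h := by
  obtain ⟨u, hu, hul⟩ := exists_word π hgen g
  obtain ⟨v, hv, hvl⟩ := exists_word π hgen h
  have hev : evalWord π (u ++ v) = g * h := by rw [evalWord_append, hu, hv]
  calc wordLen π (g * h) ≤ (u ++ v).length := wordLen_le π _ hev
    _ = wordLen π g + wordLen π h := by rw [List.length_append, hul, hvl]

theorem wordLen_pow (hgen : Generates π) (g : G) (n : ℕ) :
    wordLen π (g ^ n) ≤ n * wordLen π g := by
  induction n with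
  | zero => simp [wordLen_one]
  | succ n ih =>
    rw [pow_succ]
    calc wordLen π (g ^ n * g) ≤ wordLen π (g ^ n) + wordLen π g := wordLen_mul π hgen _ _
      _ ≤ n * wordLen π g + wordLen π g := Nat.add_le_add_right ih _
      _ = (n + 1) * wordLen π g := by ring

end GroupLemmas

/-! ### Commutative case: values of count vectors -/

section CommLemmas
variable {G : Type*} [CommGroup G] [Fintype A] (π : A → G)

/-- The value of a vector of exponents. -/
def pval (π : A → G) (n : A → ℕ) : G := ∏ a, π a ^ n a

theorem wordLen_prod (hgen : Generates π) (f : A → G) (s : Finset A) :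
    wordLen π (∏ a ∈ s, f a) ≤ ∑ a ∈ s, wordLen π (f a) := by
  classical
  induction s using Finset.induction_on with
  | empty => simp [wordLen_one]
  | insert x s hx ih =>
    rw [Finset.prod_insert hx, Finset.sum_insert hx]
    exact le_trans (wordLen_mul π hgen _ _) (Nat.add_le_add_left ih _)

theorem pval_add (m n : A → ℕ) : pval π (m + n) = pval π m * pval π n := by
  simp [pval, pow_add, Finset.prod_mul_distrib]

theorem pval_e [DecidableEq A] (a : A) : pval π (e a) = π a := by
  rw [pval, Finset.prod_eq_single a]
  · simp [e]
  · intro b _ hb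
    simp [e, Ne.symm hb]
  · intro h; exact absurd (Finset.mem_univ a) h

theorem eval_eq_pval_cnt [DecidableEq A] (w : List A) : evalWord π w = pval π (cnt w) := by
  induction w with
  | nil => simp [evalWord, pval, cnt]
  | cons a w ih => rw [evalWord_cons, ih, cnt_cons, pval_add, pval_e]

theorem eval_del [DecidableEq A] (w : List A) : ∀ m : A → ℕ,
    evalWord π w = pval π (m ⊓ cnt w) * evalWord π (del m w) := by
  induction w with
  | nil =>
    intro m
    have h0 : m ⊓ cnt ([] : List A) = 0 := by
      funext b
      simp only [Pi.inf_apply, Pi.zero_apply, cnt_nil]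
      omega
    rw [h0]
    simp [del, pval, evalWord]
  | cons a w ih =>
    intro m
    by_cases h : m a = 0
    · have hdel : del m (a :: w) = a :: del m w := by simp [del, h]
      rw [hdel, evalWord_cons, evalWord_cons, ih m, infcnt_cons_zero w h, mul_left_comm]
    · have hdel : del m (a :: w) = del (decr m a) w := by simp [del, h]
      rw [evalWord_cons, ih (decr m a), infcnt_cons_pos w h, pval_add, pval_e, hdel, mul_assoc]

/-- Canonical word realising an exponent vector, over a list of letters. -/
def repwAux (n : A → ℕ) : List A → List A
  | [] => []
  | a :: l => List.replicate (n a) a ++ repwAux n l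

theorem eval_repwAux (n : A → ℕ) (l : List A) :
    evalWord π (repwAux n l) = (l.map fun a => π a ^ n a).prod := by
  induction l with
  | nil => rfl
  | cons a l ih =>
    simp only [repwAux, List.map_cons, List.prod_cons]
    rw [evalWord_append, eval_replicate, ih]

theorem length_repwAux (n : A → ℕ) (l : List A) :
    (repwAux n l).length = (l.map n).sum := by
  induction l with
  | nil => rfl
  | cons a l ih =>
    simp only [repwAux, List.map_cons, List.sum_cons, List.length_append,
      List.length_replicate, ih]

/-- Canonical word realising an exponent vector. -/
noncomputable def repw (n : A → ℕ) : List A := repwAux n Finset.univ.toList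

theorem eval_repw (n : A → ℕ) : evalWord π (repw n) = pval π n := by
  rw [repw, eval_repwAux, Finset.prod_map_toList]
  rfl

theorem length_repw [DecidableEq A] (n : A → ℕ) : (repw n).length = plen n := by
  rw [repw, length_repwAux, Finset.sum_map_toList]
  rfl

theorem wordLen_pval_le [DecidableEq A] (n : A → ℕ) : wordLen π (pval π n) ≤ plen n := by
  have h := wordLen_le π (repw n) (eval_repw π n)
  rwa [length_repw] at h

/-- A bound on word lengths of inverses of generators. -/
noncomputable def Cconst (π : A → G) : ℕ := Finset.univ.sup fun a => wordLen π (π a)⁻¹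

theorem wordLen_inv_pval [DecidableEq A] (hgen : Generates π) (n : A → ℕ) :
    wordLen π (pval π n)⁻¹ ≤ plen n * Cconst π := by
  have h1 : (pval π n)⁻¹ = ∏ a, ((π a)⁻¹) ^ n a := by
    rw [pval, ← Finset.prod_inv_distrib]
    exact Finset.prod_congr rfl fun a _ => (inv_pow _ _).symm
  rw [h1]
  calc wordLen π (∏ a, ((π a)⁻¹) ^ n a) ≤ ∑ a, wordLen π (((π a)⁻¹) ^ n a) :=
        wordLen_prod π hgen _ _
    _ ≤ ∑ a, n a * Cconst π := by
        have hC : ∀ b : A, wordLen π (π b)⁻¹ ≤ Cconst π := fun b =>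
          Finset.le_sup (f := fun a => wordLen π (π a)⁻¹) (Finset.mem_univ b)
        exact Finset.sum_le_sum fun a _ =>
          le_trans (wordLen_pow π hgen _ _) (Nat.mul_le_mul le_rfl (hC a))
    _ = plen n * Cconst π := by rw [plen, Finset.sum_mul]

theorem wordLen_inv_eval [DecidableEq A] (hgen : Generates π) (u : List A) :
    wordLen π (evalWord π u)⁻¹ ≤ u.length * Cconst π := by
  rw [eval_eq_pval_cnt]
  have h := wordLen_inv_pval π hgen (cnt u)
  rwa [plen_cnt] at h

/-! ### Non-geodesic exponent vectors and Dickson's lemma -/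

open Classical in
/-- The set of non-geodesic exponent vectors. -/
noncomputable def NG (π : A → G) : Set (A → ℕ) := {n | wordLen π (pval π n) < plen n}

/-- Minimal non-geodesic exponent vectors. -/
noncomputable def MinNG (π : A → G) : Set (A → ℕ) :=
  {m | m ∈ NG π ∧ ∀ m' ∈ NG π, m' ≤ m → m' = m}

theorem MinNG_antichain : IsAntichain (· ≤ ·) (MinNG π) := by
  intro m hm m' hm' hne hle
  exact hne (hm'.2 m hm.1 hle)

theorem MinNG_finite : (MinNG π).Finite := by
  have hpwo : (MinNG π).IsPWO :=
    Set.isPWO_of_wellQuasiOrderedLE (MinNG π)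
  exact (MinNG_antichain π).finite_of_partiallyWellOrderedOn hpwo

theorem exists_min_aux : ∀ k : ℕ, ∀ n ∈ NG π, plen n ≤ k → ∃ m ∈ MinNG π, m ≤ n := by
  classical
  intro k
  induction k with
  | zero =>
    intro n hn hle
    by_cases hmin : ∀ m' ∈ NG π, m' ≤ n → m' = n
    · exact ⟨n, ⟨hn, hmin⟩, le_rfl⟩
    · push_neg at hmin
      obtain ⟨m', hm', hle', hne⟩ := hmin
      have := plen_lt_of_lt hle' hne
      omega
  | succ k ih =>
    intro n hn hle
    by_cases hmin : ∀ m' ∈ NG π, m' ≤ n → m' = n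
    · exact ⟨n, ⟨hn, hmin⟩, le_rfl⟩
    · push_neg at hmin
      obtain ⟨m', hm', hle', hne⟩ := hmin
      have hlt := plen_lt_of_lt hle' hne
      obtain ⟨m, hm, hmle⟩ := ih m' hm' (by omega)
      exact ⟨m, hm, le_trans hmle hle'⟩

open Classical in
/-- A bound on the size of minimal non-geodesic vectors. -/
noncomputable def kconst (π : A → G) : ℕ := (MinNG_finite π).toFinset.sup plen

open Classical in
theorem plen_le_kconst {m : A → ℕ} (hm : m ∈ MinNG π) : plen m ≤ kconst π :=
  Finset.le_sup ((MinNG_finite π).mem_toFinset.mpr hm)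

end CommLemmas

end FFTPaux

open FFTPaux in
/-- **Proposition 4.4 (abelian case).** Every finite monoid generating set of a
finitely generated abelian group has the falsification by fellow traveller property. -/
theorem abelian_fftp {A G : Type*} [Fintype A] [CommGroup G]
    (π : A → G) (hgen : Generates π) :
    ∃ δ : ℕ, FFTP π δ := by
  classical
  refine ⟨kconst π * Cconst π + kconst π, ?_⟩
  intro w hw
  -- the word is non-geodesic
  have hle0 : wordLen π (evalWord π w) ≤ w.length := wordLen_le π w rfl
  have hlt : wordLen π (evalWord π w) < w.length :=
    lt_of_le_of_ne hle0 fun h => hw h.symm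
  have hcnt : cnt w ∈ NG π := by
    simp only [NG, Set.mem_setOf_eq]
    rw [← eval_eq_pval_cnt, plen_cnt]
    exact hlt
  obtain ⟨m, hmMin, hmle⟩ := exists_min_aux π (plen (cnt w)) (cnt w) hcnt le_rfl
  have hk : plen m ≤ kconst π := plen_le_kconst π hmMin
  obtain ⟨v₀, hv₀, hv₀l⟩ := exists_word π hgen (pval π m)
  have hv₀lt : v₀.length < plen m := by
    rw [hv₀l]; exact hmMin.1
  have hinf : m ⊓ cnt w = m := inf_eq_left.mpr hmle
  have heval : evalWord π w = pval π m * evalWord π (del m w) := by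
    have h := eval_del π w m
    rwa [hinf] at h
  have hlen : (del m w).length + plen m = w.length := by
    have h := length_del w m
    rwa [hinf] at h
  have hfle : ∀ t, (del m (w.take t)).length ≤ (del m w).length :=
    fun t => (del_take_prefix w m t).length_le
  refine ⟨del m w ++ v₀, ?_, ?_, ?_, ?_⟩
  · rw [evalWord_append, hv₀, heval, mul_comm]
  · rw [List.length_append]
    omega
  · -- the old path is tracked by the new path
    refine ⟨fun t => if t < w.length then (del m (w.take t)).length
      else (t - w.length) + (del m w ++ v₀).length, ?_, ?_, ?_⟩
    · apply monotone_nat_of_le_succ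
      intro t
      by_cases h1 : t + 1 < w.length
      · have h0 : t < w.length := by omega
        rw [if_pos h0, if_pos h1]
        exact (del_take_prefix_mono w m (Nat.le_succ t)).length_le
      · by_cases h0 : t < w.length
        · rw [if_pos h0, if_neg h1]
          have h2 : (del m w).length ≤ (del m w ++ v₀).length := by
            rw [List.length_append]; omega
          exact le_trans (hfle t) (le_trans h2 (Nat.le_add_left _ _))
        · rw [if_neg h0, if_neg h1]
          omega
    · intro N
      refine ⟨w.length + N, ?_⟩
      simp only []
      rw [if_neg (by omega)]
      omega
    · intro t
      simp only []
      by_cases h0 : t < w.length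
      · rw [if_pos h0]
        have hpre := del_take_prefix w m t
        have htake : (del m w ++ v₀).take (del m (w.take t)).length = del m (w.take t) := by
          rw [List.take_append, Nat.sub_eq_zero_of_le (hfle t),
            List.take_zero, List.append_nil]
          exact (List.prefix_iff_eq_take.mp hpre).symm
        simp only [cayleyDist, pathOf]
        rw [htake, eval_del π (w.take t) m]
        have hres : ∀ P X : G, (P * X)⁻¹ * X = P⁻¹ := by
          intro P X
          rw [mul_comm P X, mul_inv_rev, mul_assoc, inv_mul_cancel, mul_one]
        rw [hres]
        calc wordLen π (pval π (m ⊓ cnt (w.take t)))⁻¹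
            ≤ plen (m ⊓ cnt (w.take t)) * Cconst π := wordLen_inv_pval π hgen _
          _ ≤ kconst π * Cconst π :=
              Nat.mul_le_mul (le_trans (plen_mono inf_le_left) hk) le_rfl
          _ ≤ kconst π * Cconst π + kconst π := Nat.le_add_right _ _
      · rw [if_neg h0]
        have hwt : w.take t = w := List.take_of_length_le (by omega)
        have hvt : (del m w ++ v₀).take ((t - w.length) + (del m w ++ v₀).length) =
            del m w ++ v₀ := List.take_of_length_le (by omega)
        simp only [cayleyDist, pathOf]
        rw [hwt, hvt, evalWord_append, hv₀, heval, mul_comm (evalWord π (del m w)) (pval π m),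
          inv_mul_cancel, wordLen_one]
        exact Nat.zero_le _
  · -- the new path is tracked by the old path
    refine ⟨fun s => if s ≤ (del m w).length
      then sInf {t | s ≤ (del m (w.take t)).length} else w.length + s, ?_, ?_, ?_⟩
    · apply monotone_nat_of_le_succ
      intro s
      by_cases h1 : s + 1 ≤ (del m w).length
      · have h0 : s ≤ (del m w).length := by omega
        rw [if_pos h0, if_pos h1]
        apply Nat.sInf_le
        have hmem := Nat.sInf_mem (⟨w.length, mem_delset w m h1⟩ :
          Set.Nonempty {t | s + 1 ≤ (del m (w.take t)).length})
        simp only [Set.mem_setOf_eq] at hmem ⊢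
        omega
      · by_cases h0 : s ≤ (del m w).length
        · rw [if_pos h0, if_neg h1]
          exact le_trans (Nat.sInf_le (mem_delset w m h0)) (by omega)
        · rw [if_neg h0, if_neg h1]
          omega
    · intro N
      refine ⟨(del m w).length + 1 + N, ?_⟩
      simp only []
      rw [if_neg (by omega)]
      omega
    · intro s
      simp only []
      by_cases h0 : s ≤ (del m w).length
      · rw [if_pos h0]
        have hex := del_take_exact w m s h0
        set T := sInf {t | s ≤ (del m (w.take t)).length} with hT
        have hpre := del_take_prefix w m T
        have h1 : del m (w.take T) = (del m w).take s := by
          rw [← hex]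
          exact List.prefix_iff_eq_take.mp hpre
        have h2 : (del m w ++ v₀).take s = del m (w.take T) := by
          rw [List.take_append, Nat.sub_eq_zero_of_le h0,
            List.take_zero, List.append_nil, ← h1]
        simp only [cayleyDist, pathOf]
        rw [h2, eval_del π (w.take T) m]
        have hres : ∀ P X : G, X⁻¹ * (P * X) = P := by
          intro P X
          rw [mul_comm P X, ← mul_assoc, inv_mul_cancel, one_mul]
        rw [hres]
        calc wordLen π (pval π (m ⊓ cnt (w.take T)))
            ≤ plen (m ⊓ cnt (w.take T)) := wordLen_pval_le π _
          _ ≤ plen m := plen_mono inf_le_left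
          _ ≤ kconst π := hk
          _ ≤ kconst π * Cconst π + kconst π := Nat.le_add_left _ _
      · rw [if_neg h0]
        push_neg at h0
        have hwt : w.take (w.length + s) = w := List.take_of_length_le (by omega)
        have h2 : (del m w ++ v₀).take s = del m w ++ v₀.take (s - (del m w).length) := by
          rw [List.take_append, List.take_of_length_le (le_of_lt h0)]
        simp only [cayleyDist, pathOf]
        rw [h2, hwt, evalWord_append, heval]
        have hres : ∀ X Y P : G, (X * Y)⁻¹ * (P * X) = Y⁻¹ * P := by
          intro X Y P
          rw [mul_inv_rev, mul_comm P X, mul_assoc, inv_mul_cancel_left]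
        rw [hres]
        have hY : wordLen π (evalWord π (v₀.take (s - (del m w).length)))⁻¹ ≤
            kconst π * Cconst π := by
          have hlen' : (v₀.take (s - (del m w).length)).length ≤ kconst π := by
            rw [List.length_take]
            omega
          exact le_trans (wordLen_inv_eval π hgen _) (Nat.mul_le_mul hlen' le_rfl)
        have hP : wordLen π (pval π m) ≤ kconst π := le_trans (wordLen_pval_le π m) hk
        exact le_trans (wordLen_mul π hgen _ _) (Nat.add_le_add hY hP)
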